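/- Let P be a poset and D a directed subset of P. Then the Scott-closure cl(D) of D is a pre-C-compact element of Γ(P). In particular, for every x ∈ P the principal ideal ↓x is pre-C-compact. -/

import Mathlib

/-- A Scott-closed subset of a poset: a lower set closed under suprema of directed subsets
that exist. -/
def ScottClosed {P : Type*} [Preorder P] (A : Set P) : Prop :=
  IsLowerSet A ∧ ∀ D ⊆ A, D.Nonempty → DirectedOn (· ≤ ·) D →
    ∀ a : P, IsLUB D a → a ∈ A

/-- The Scott closure: the intersection of all Scott-closed supersets. -/
def scottClosure {P : Type*} [Preorder P] (A : Set P) : Set P :=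
  ⋂₀ {C : Set P | ScottClosed C ∧ A ⊆ C}

/-- The supremum of a family of sets in the complete lattice `Γ(P)` of Scott-closed sets:
the Scott closure of its union. -/
def GammaSup {P : Type*} [Preorder P] (𝒞 : Set (Set P)) : Set P :=
  scottClosure (⋃₀ 𝒞)

/-- `𝒟 ∈ ℋ`: `𝒟` is a family of nonempty Scott-closed sets such that `↓a ∈ 𝒟` whenever
`a ∈ A ∈ 𝒟`, and `𝒟` is d-closed: the supremum in `Γ(P)` of any nonempty directed (under
inclusion) subfamily of `𝒟` belongs to `𝒟`. -/
def MemH {P : Type*} [Preorder P] (𝒟 : Set (Set P)) : Prop :=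
  (∀ A ∈ 𝒟, ScottClosed A ∧ A.Nonempty) ∧
  (∀ A ∈ 𝒟, ∀ a ∈ A, Set.Iic a ∈ 𝒟) ∧
  (∀ 𝒞 ⊆ 𝒟, 𝒞.Nonempty → DirectedOn (· ⊆ ·) 𝒞 → GammaSup 𝒞 ∈ 𝒟)

/-- `A` is beneath `B` (`A ≺ B`): for every `𝒟 ∈ ℋ` with `B` contained in the supremum of
`𝒟` in `Γ(P)`, one has `A ∈ 𝒟`. -/
def Beneath {P : Type*} [Preorder P] (A B : Set P) : Prop :=
  ∀ 𝒟 : Set (Set P), MemH 𝒟 → B ⊆ GammaSup 𝒟 → A ∈ 𝒟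

/-- A pre-C-compact element of `Γ(P)`: a Scott-closed set `A` with `A ≺ A`. -/
def PreCCompact {P : Type*} [Preorder P] (A : Set P) : Prop :=
  ScottClosed A ∧ Beneath A A

section Aux

variable {P : Type*} [Preorder P]

lemma scottClosed_Iic (a : P) : ScottClosed (Set.Iic a) := by
  refine ⟨fun x y hxy hx => le_trans hxy hx, ?_⟩
  intro D hD _ _ b hb
  exact hb.2 fun d hd => hD hd

lemma subset_scottClosure (A : Set P) : A ⊆ scottClosure A :=
  fun _ hx => Set.mem_sInter.2 fun _ hC => hC.2 hx

lemma scottClosure_min {A C : Set P} (hC : ScottClosed C) (h : A ⊆ C) :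
    scottClosure A ⊆ C :=
  fun x hx => Set.mem_sInter.1 hx C ⟨hC, h⟩

lemma scottClosed_scottClosure (A : Set P) : ScottClosed (scottClosure A) := by
  constructor
  · intro x y hxy hx
    exact Set.mem_sInter.2 fun C hC => hC.1.1 hxy (Set.mem_sInter.1 hx C hC)
  · intro D hD hne hdir a ha
    exact Set.mem_sInter.2 fun C hC =>
      hC.1.2 D (fun d hd => Set.mem_sInter.1 (hD hd) C hC) hne hdir a ha

lemma directedOn_Iic_image {D : Set P} (hdir : DirectedOn (· ≤ ·) D) :
    DirectedOn (· ⊆ ·) (Set.Iic '' D) := by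
  rintro _ ⟨d1, hd1, rfl⟩ _ ⟨d2, hd2, rfl⟩
  obtain ⟨d, hd, h1, h2⟩ := hdir d1 hd1 d2 hd2
  exact ⟨Set.Iic d, ⟨d, hd, rfl⟩, Set.Iic_subset_Iic.2 h1, Set.Iic_subset_Iic.2 h2⟩

lemma gammaSup_Iic_image {D : Set P} : GammaSup (Set.Iic '' D) = scottClosure D := by
  apply subset_antisymm
  · refine scottClosure_min (scottClosed_scottClosure D) ?_
    rintro x ⟨_, ⟨d, hd, rfl⟩, hx⟩
    exact (scottClosed_scottClosure D).1 hx (subset_scottClosure D hd)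
  · refine scottClosure_min (scottClosed_scottClosure _) ?_
    intro d hd
    exact subset_scottClosure _ ⟨Set.Iic d, ⟨d, hd, rfl⟩, le_refl d⟩

lemma gammaSup_Iic_image_of_isLUB {D : Set P} (hne : D.Nonempty)
    (hdir : DirectedOn (· ≤ ·) D) {a : P} (ha : IsLUB D a) :
    GammaSup (Set.Iic '' D) = Set.Iic a := by
  apply subset_antisymm
  · refine scottClosure_min (scottClosed_Iic a) ?_
    rintro x ⟨_, ⟨d, hd, rfl⟩, hx⟩
    exact le_trans hx (ha.1 hd)
  · have hsub : D ⊆ GammaSup (Set.Iic '' D) := fun d hd =>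
      subset_scottClosure _ ⟨Set.Iic d, ⟨d, hd, rfl⟩, le_refl d⟩
    have hmem : a ∈ GammaSup (Set.Iic '' D) :=
      (scottClosed_scottClosure _).2 D hsub hne hdir a ha
    exact fun x hx => (scottClosed_scottClosure _).1 hx hmem

lemma beneath_scottClosure_directed {D : Set P} (hne : D.Nonempty)
    (hdir : DirectedOn (· ≤ ·) D) :
    Beneath (scottClosure D) (scottClosure D) := by
  intro 𝒟 h𝒟 hsub
  set E : Set P := {x | Set.Iic x ∈ 𝒟} with hE
  have hEclosed : ScottClosed E := by
    constructor
    · intro x y hxy hx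
      exact h𝒟.2.1 _ hx _ (Set.mem_Iic.2 hxy)
    · intro D' hD' hne' hdir' a ha
      have h1 : Set.Iic '' D' ⊆ 𝒟 := by rintro _ ⟨d, hd, rfl⟩; exact hD' hd
      have h2 := h𝒟.2.2 _ h1 (hne'.image _) (directedOn_Iic_image hdir')
      rwa [gammaSup_Iic_image_of_isLUB hne' hdir' ha] at h2
  have hUE : ⋃₀ 𝒟 ⊆ E := by
    rintro x ⟨A, hA, hx⟩
    exact h𝒟.2.1 A hA x hx
  have hDE : D ⊆ E := fun d hd =>
    scottClosure_min hEclosed hUE (hsub (subset_scottClosure D hd))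
  have h1 : Set.Iic '' D ⊆ 𝒟 := by rintro _ ⟨d, hd, rfl⟩; exact hDE hd
  have h2 := h𝒟.2.2 _ h1 (hne.image _) (directedOn_Iic_image hdir)
  rwa [gammaSup_Iic_image] at h2

lemma scottClosure_singleton (x : P) : scottClosure {x} = Set.Iic x := by
  apply subset_antisymm
  · exact scottClosure_min (scottClosed_Iic x) (by simp)
  · intro y hy
    exact (scottClosed_scottClosure _).1 hy (subset_scottClosure _ rfl)

end Aux

/-- the Scott closure of a directed set is pre-C-compact; in particular every
principal ideal `↓x` is pre-C-compact. -/
theorem scottClosure_directed_preCCompact {P : Type*} [PartialOrder P] :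
    (∀ D : Set P, D.Nonempty → DirectedOn (· ≤ ·) D → PreCCompact (scottClosure D)) ∧
    (∀ x : P, PreCCompact (Set.Iic x)) := by
  constructor
  · intro D hne hdir
    exact ⟨scottClosed_scottClosure D, beneath_scottClosure_directed hne hdir⟩
  · intro x
    have h := beneath_scottClosure_directed (D := ({x} : Set P))
      (Set.singleton_nonempty x) (directedOn_singleton x)
    rw [scottClosure_singleton] at h
    exact ⟨scottClosed_Iic x, h⟩
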